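/- For positive integers a, b, c with a ≤ b, the quantity 2^{-a} · ∏_{i=1}^{a} (2c+b-a+i)/(c+b-a+i) · ∏_{i=1}^{a} [ ∏_{j=1}^{b-a+1} (c+i+j-1)/(i+j-1) · ∏_{j=b-a+2}^{b-a+i} (2c+i+j-1)/(i+j-1) ] is positive, and when multiplied by 2^a it is a positive rational number whose denominator divides ∏_{i=1}^{a}(c+b-a+i). -/

import Mathlib

open Finset

set_option maxHeartbeats 2000000

/-- sum of q consecutive ⌊y/q⌋ -/
lemma sumIco_div (q : ℕ) (hq : 0 < q) : ∀ n : ℕ, ∑ y ∈ Ico n (n + q), y / q = n := by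
  intro n
  induction n with
  | zero =>
    rw [zero_add]
    apply Finset.sum_eq_zero
    intro y hy
    exact Nat.div_eq_of_lt (Finset.mem_Ico.mp hy).2
  | succ n ih =>
    rw [show n + 1 + q = (n + q) + 1 from by ring, Finset.sum_Ico_succ_top (by omega)]
    rw [Finset.sum_eq_sum_Ico_succ_bot (show n < n + q by omega)] at ih
    have h3 : (n+q)/q = n/q + 1 := Nat.add_div_right _ hq
    omega

/-- sum of (β+2x)/q over a window of length q -/
lemma sumIco_div2 (q β : ℕ) (hq : 0 < q) :
    ∀ n : ℕ, ∑ x ∈ Ico n (n + q), (β + 2*x) / q = 2*n + ∑ x ∈ range q, (β + 2*x) / q := by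
  intro n
  induction n with
  | zero => rw [zero_add, Finset.range_eq_Ico, Nat.mul_zero, zero_add]
  | succ n ih =>
    rw [show n + 1 + q = (n + q) + 1 from by ring, Finset.sum_Ico_succ_top (by omega)]
    rw [Finset.sum_eq_sum_Ico_succ_bot (show n < n + q by omega)] at ih
    have h3 : (β+2*(n+q))/q = (β+2*n)/q + 2 := by
      have e : β + 2*(n+q) = (β + 2*n) + q + q := by ring
      rw [e, Nat.add_div_right _ hq, Nat.add_div_right _ hq]
    omega

/-- C₀(β+2) = C₀(β) + 2 -/
lemma C0_step (q β : ℕ) (hq : 0 < q) :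
    ∑ x ∈ range q, (β + 2 + 2*x) / q = (∑ x ∈ range q, (β + 2*x) / q) + 2 := by
  have h : ∑ x ∈ range q, (β + 2 + 2*x) / q = ∑ x ∈ Ico 1 (1+q), (β + 2*x) / q := by
    rw [Finset.sum_Ico_eq_sum_range]
    simp only [Nat.add_sub_cancel_left]
    apply Finset.sum_congr rfl
    intro x _
    congr 1
    ring
  rw [h, sumIco_div2 q β hq 1]
  omega

lemma C0_step_mul (q β : ℕ) (hq : 0 < q) (c : ℕ) :
    ∑ x ∈ range q, (β + 2*c + 2*x) / q = (∑ x ∈ range q, (β + 2*x) / q) + 2*c := by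
  induction c with
  | zero => simp
  | succ c ih =>
    calc ∑ x ∈ range q, (β + 2*(c+1) + 2*x) / q
        = ∑ x ∈ range q, (β + 2*c + 2 + 2*x) / q := by
          apply Finset.sum_congr rfl; intro x _; exact congrArg (· / q) (by ring)
      _ = (∑ x ∈ range q, (β + 2*c + 2*x) / q) + 2 := C0_step q (β+2*c) hq
      _ = (∑ x ∈ range q, (β + 2*x) / q) + 2*(c+1) := by rw [ih]; ring
open Finset

lemma div_five (q n : ℕ) (hq : 0 < q) (h : n < 5*q) :
    n/q = (if q ≤ n then 1 else 0) + (if 2*q ≤ n then 1 else 0)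
      + (if 3*q ≤ n then 1 else 0) + (if 4*q ≤ n then 1 else 0) := by
  split_ifs <;>
    first
      | exact Nat.div_eq_of_lt (by omega)
      | exact Nat.div_eq_of_lt_le (by omega) (by omega)
      | omega

lemma CF1 (q : ℕ) (hq : 0 < q) (β : ℕ) :
    ∀ a : ℕ, β + a ≤ 5*q →
    ∑ x ∈ range a, (β + x)/q
      = (a - (q - β)) + (a - (2*q - β)) + (a - (3*q - β)) + (a - (4*q - β)) := by
  intro a
  induction a with
  | zero => simp
  | succ a ih =>
    intro h
    rw [Finset.sum_range_succ, ih (by omega), div_five q (β+a) hq (by omega)]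
    split_ifs <;> omega

lemma CF2 (q : ℕ) (hq : 0 < q) (β : ℕ) :
    ∀ a : ℕ, β + 2*a ≤ 5*q + 1 →
    ∑ x ∈ range a, (β + 2*x)/q
      = (a - ((q - β + 1)/2)) + (a - ((2*q - β + 1)/2))
        + (a - ((3*q - β + 1)/2)) + (a - ((4*q - β + 1)/2)) := by
  intro a
  induction a with
  | zero => simp
  | succ a ih =>
    intro h
    rw [Finset.sum_range_succ, ih (by omega), div_five q (β+2*a) hq (by omega)]
    split_ifs <;> omega

lemma KEY_small (q a c m : ℕ) (hq : 0 < q) (ha : a ≤ q) (hc : c < q) (hm : m < q) :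
    ∑ x ∈ range a, ((m+1+2*x)/q + ((c+x)/q + (2*c+m+1+x)/q))
      ≤ ∑ x ∈ range a, (x/q + ((c+m+1+x)/q + (2*c+m+1+2*x)/q)) := by
  rw [Finset.sum_add_distrib, Finset.sum_add_distrib,
      Finset.sum_add_distrib, Finset.sum_add_distrib]
  have e0 : ∑ x ∈ range a, x/q = ∑ x ∈ range a, (0+x)/q := by
    apply Finset.sum_congr rfl; intro x _; rw [Nat.zero_add]
  rw [e0, CF1 q hq 0 a (by omega), CF1 q hq c a (by omega),
      CF1 q hq (c+m+1) a (by omega), CF1 q hq (2*c+m+1) a (by omega),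
      CF2 q hq (m+1) a (by omega), CF2 q hq (2*c+m+1) a (by omega)]
  rw [show a - (q - 0) = 0 from by omega, show a - (2*q - 0) = 0 from by omega,
      show a - (3*q - 0) = 0 from by omega, show a - (4*q - 0) = 0 from by omega,
      show a - (2*q - c) = 0 from by omega, show a - (3*q - c) = 0 from by omega,
      show a - (4*q - c) = 0 from by omega,
      show a - (3*q - (c+m+1)) = 0 from by omega,
      show a - (4*q - (c+m+1)) = 0 from by omega,
      show a - (4*q - (2*c+m+1)) = 0 from by omega,
      show a - ((3*q - (m+1) + 1)/2) = 0 from by omega,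
      show a - ((4*q - (m+1) + 1)/2) = 0 from by omega]
  rcases (by omega : (2*c+m+1 < q ∧ c+m+1 < q) ∨ (q ≤ 2*c+m+1 ∧ 2*c+m+1 < 2*q ∧ c+m+1 < q) ∨
      (q ≤ 2*c+m+1 ∧ 2*c+m+1 < 2*q ∧ q ≤ c+m+1) ∨ (2*q ≤ 2*c+m+1 ∧ q ≤ c+m+1)) with h | h | h | h
  · have f1 : (a - (q - (m+1) + 1)/2) + (a - (q - (2*c+m+1))) ≤ (a - (q - (c+m+1))) + (a - (q - (2*c+m+1) + 1)/2) := by omega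
    have f2 : (a - (2*q - (m+1) + 1)/2) + (a - (q - c)) ≤ (a - (2*q - (c+m+1))) + (a - (2*q - (2*c+m+1) + 1)/2) := by omega
    have f3 : (a - (2*q - (2*c+m+1))) + (a - (3*q - (2*c+m+1))) ≤ (a - (3*q - (2*c+m+1) + 1)/2) + (a - (4*q - (2*c+m+1) + 1)/2) := by omega
    linarith
  · have f1 : (a - (q - (m+1) + 1)/2) + (a - (2*q - (2*c+m+1))) ≤ (a - (q - (c+m+1))) + (a - (3*q - (2*c+m+1) + 1)/2) := by omega
    have f2 : (a - (2*q - (m+1) + 1)/2) + (a - (q - c)) ≤ (a - (2*q - (c+m+1))) + (a - (2*q - (2*c+m+1) + 1)/2) := by omega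
    have f3 : (a - (q - (2*c+m+1))) + (a - (3*q - (2*c+m+1))) ≤ (a - (q - (2*c+m+1) + 1)/2) + (a - (4*q - (2*c+m+1) + 1)/2) := by omega
    linarith
  · have f1 : (a - (q - (m+1) + 1)/2) + (a - (q - c)) ≤ (a - (q - (c+m+1))) + (a - (3*q - (2*c+m+1) + 1)/2) := by omega
    have f2 : (a - (2*q - (m+1) + 1)/2) + (a - (2*q - (2*c+m+1))) ≤ (a - (2*q - (c+m+1))) + (a - (2*q - (2*c+m+1) + 1)/2) := by omega
    have f3 : (a - (q - (2*c+m+1))) + (a - (3*q - (2*c+m+1))) ≤ (a - (q - (2*c+m+1) + 1)/2) + (a - (4*q - (2*c+m+1) + 1)/2) := by omega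
    linarith
  · have f1 : (a - (q - (m+1) + 1)/2) + (a - (q - c)) ≤ (a - (q - (c+m+1))) + (a - (3*q - (2*c+m+1) + 1)/2) := by omega
    have f2 : (a - (2*q - (m+1) + 1)/2) + (a - (3*q - (2*c+m+1))) ≤ (a - (2*q - (c+m+1))) + (a - (4*q - (2*c+m+1) + 1)/2) := by omega
    have f3 : (a - (q - (2*c+m+1))) + (a - (2*q - (2*c+m+1))) ≤ (a - (q - (2*c+m+1) + 1)/2) + (a - (2*q - (2*c+m+1) + 1)/2) := by omega
    linarith
lemma sumIco_shift (q β : ℕ) (hq : 0 < q) (n : ℕ) :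
    ∑ x ∈ Ico n (n + q), (β + x)/q = β + n := by
  have h1 : ∑ x ∈ Ico n (n + q), (β + x)/q = ∑ x ∈ range q, (β + (n + x))/q := by
    rw [Finset.sum_Ico_eq_sum_range]; simp
  have h2 : ∑ y ∈ Ico (β + n) (β + n + q), y/q = ∑ x ∈ range q, (β + (n + x))/q := by
    rw [Finset.sum_Ico_eq_sum_range]
    simp only [Nat.add_sub_cancel_left]
    apply Finset.sum_congr rfl
    intro x _
    exact congrArg (· / q) (by ring)
  rw [h1, ← h2, sumIco_div q hq]

/-- The key floor-sum inequality. -/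
lemma KEY (q : ℕ) (hq : 0 < q) (c m : ℕ) : ∀ a : ℕ,
    ∑ x ∈ range a, ((m+1+2*x)/q + ((c+x)/q + (2*c+m+1+x)/q))
      ≤ ∑ x ∈ range a, (x/q + ((c+m+1+x)/q + (2*c+m+1+2*x)/q)) := by
  intro a
  induction a using Nat.strong_induction_on with
  | _ a ih =>
    rcases lt_or_ge a q with hlt | hge
    · -- base case: reduce c, m mod q
      have hL : ∀ x, (m+1+2*x)/q + ((c+x)/q + (2*c+m+1+x)/q)
          = (3*(c/q)+2*(m/q)) + ((m%q+1+2*x)/q + ((c%q+x)/q + (2*(c%q)+m%q+1+x)/q)) := by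
        intro x
        have e1 : m+1+2*x = q*(m/q) + (m%q+1+2*x) := by
          conv_lhs => rw [← Nat.div_add_mod m q]
          ring
        have e2 : c+x = q*(c/q) + (c%q+x) := by
          conv_lhs => rw [← Nat.div_add_mod c q]
          ring
        have e3 : 2*c+m+1+x = q*(2*(c/q)+m/q) + (2*(c%q)+m%q+1+x) := by
          conv_lhs => rw [← Nat.div_add_mod c q, ← Nat.div_add_mod m q]
          ring
        rw [e1, e2, e3, Nat.mul_add_div hq, Nat.mul_add_div hq, Nat.mul_add_div hq]
        ring
      have hR : ∀ x, x/q + ((c+m+1+x)/q + (2*c+m+1+2*x)/q)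
          = (3*(c/q)+2*(m/q)) + (x/q + ((c%q+m%q+1+x)/q + (2*(c%q)+m%q+1+2*x)/q)) := by
        intro x
        have e4 : c+m+1+x = q*(c/q+m/q) + (c%q+m%q+1+x) := by
          conv_lhs => rw [← Nat.div_add_mod c q, ← Nat.div_add_mod m q]
          ring
        have e5 : 2*c+m+1+2*x = q*(2*(c/q)+m/q) + (2*(c%q)+m%q+1+2*x) := by
          conv_lhs => rw [← Nat.div_add_mod c q, ← Nat.div_add_mod m q]
          ring
        rw [e4, e5, Nat.mul_add_div hq, Nat.mul_add_div hq]
        ring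
      calc ∑ x ∈ range a, ((m+1+2*x)/q + ((c+x)/q + (2*c+m+1+x)/q))
          = ∑ x ∈ range a, ((3*(c/q)+2*(m/q))
              + ((m%q+1+2*x)/q + ((c%q+x)/q + (2*(c%q)+m%q+1+x)/q))) :=
            Finset.sum_congr rfl (fun x _ => hL x)
        _ ≤ ∑ x ∈ range a, ((3*(c/q)+2*(m/q))
              + (x/q + ((c%q+m%q+1+x)/q + (2*(c%q)+m%q+1+2*x)/q))) := by
            have ks := KEY_small q a (c%q) (m%q) hq (le_of_lt hlt)
              (Nat.mod_lt _ hq) (Nat.mod_lt _ hq)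
            simp only [Finset.sum_add_distrib] at ks ⊢
            omega
        _ = ∑ x ∈ range a, (x/q + ((c+m+1+x)/q + (2*c+m+1+2*x)/q)) :=
            (Finset.sum_congr rfl (fun x _ => hR x)).symm
    · -- inductive step: strip a window of length q from the top
      set n := a - q with hn
      have han : a = n + q := by omega
      have hsplit : ∀ f : ℕ → ℕ, ∑ x ∈ range a, f x
          = ∑ x ∈ range n, f x + ∑ x ∈ Ico n (n + q), f x := by
        intro f
        rw [Finset.range_eq_Ico, han,
          ← Finset.sum_Ico_consecutive _ (Nat.zero_le n) (by omega : n ≤ n + q),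
          Finset.range_eq_Ico]
      rw [hsplit, hsplit]
      have hIH := ih n (by omega)
      -- window sums
      have w1 : ∑ x ∈ Ico n (n + q), ((m+1+2*x)/q + ((c+x)/q + (2*c+m+1+x)/q))
          = (2*n + ∑ x ∈ range q, (m+1+2*x)/q) + ((c + n) + (2*c+m+1 + n)) := by
        rw [Finset.sum_add_distrib, Finset.sum_add_distrib,
          sumIco_div2 q (m+1) hq n, sumIco_shift q c hq n, sumIco_shift q (2*c+m+1) hq n]
      have w2 : ∑ x ∈ Ico n (n + q), (x/q + ((c+m+1+x)/q + (2*c+m+1+2*x)/q))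
          = n + ((c+m+1 + n) + (2*n + ∑ x ∈ range q, (2*c+m+1+2*x)/q)) := by
        rw [Finset.sum_add_distrib, Finset.sum_add_distrib,
          sumIco_div q hq n, sumIco_shift q (c+m+1) hq n, sumIco_div2 q (2*c+m+1) hq n]
      have w3 : ∑ x ∈ range q, (2*c+m+1+2*x)/q = (∑ x ∈ range q, (m+1+2*x)/q) + 2*c := by
        have := C0_step_mul q (m+1) hq c
        calc ∑ x ∈ range q, (2*c+m+1+2*x)/q = ∑ x ∈ range q, (m+1+2*c+2*x)/q :=
              Finset.sum_congr rfl (fun x _ => congrArg (· / q) (by ring))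
          _ = (∑ x ∈ range q, (m+1+2*x)/q) + 2*c := this
      rw [w1, w2, w3]
      omega

open scoped Nat
lemma prodRange (β : ℕ) : ∀ k : ℕ, β ! * ∏ t ∈ range k, (β+1+t) = (β+k)! := by
  intro k
  induction k with
  | zero => simp
  | succ k ih =>
    rw [Finset.prod_range_succ, ← Nat.mul_assoc, ih, show β+(k+1) = (β+k)+1 from rfl,
      Nat.factorial_succ]
    ring

/-- numerator factor -/
def Pn (m c i : ℕ) : ℕ :=
  (∏ j ∈ Icc 1 (m+1), (c+i+j-1)) * ∏ j ∈ Icc (m+2) (m+i), (2*c+i+j-1)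

/-- denominator factor -/
def Pd (m i : ℕ) : ℕ := ∏ j ∈ Icc 1 (m+i), (i+j-1)

lemma Icc_one_prod_eq_range {f : ℕ → ℕ} (k : ℕ) :
    ∏ j ∈ Icc 1 k, f j = ∏ t ∈ range k, f (1+t) := by
  rw [show Icc 1 k = Ico 1 (k+1) by ext x; simp only [Finset.mem_Icc, Finset.mem_Ico]; omega, Finset.prod_Ico_eq_prod_range]
  simp

lemma Pd_eq (m i : ℕ) (hi : 1 ≤ i) : (i-1)! * Pd m i = (m+2*i-1)! := by
  rw [Pd, Icc_one_prod_eq_range]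
  have h1 : ∀ t, i + (1+t) - 1 = (i-1)+1+t := by intro t; omega
  calc (i-1)! * ∏ t ∈ range (m+i), (i+(1+t)-1)
      = (i-1)! * ∏ t ∈ range (m+i), ((i-1)+1+t) := by
        congr 1; exact Finset.prod_congr rfl fun t _ => by rw [h1]
    _ = ((i-1)+(m+i))! := prodRange (i-1) (m+i)
    _ = (m+2*i-1)! := by congr 1; omega

lemma Pn_eq (m c i : ℕ) (hi : 1 ≤ i) :
    ((c+i-1)! * (2*c+m+i)!) * Pn m c i = (c+m+i)! * (2*c+m+2*i-1)! := by
  rw [Pn]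
  have hA : (c+i-1)! * ∏ j ∈ Icc 1 (m+1), (c+i+j-1) = (c+m+i)! := by
    rw [Icc_one_prod_eq_range]
    calc (c+i-1)! * ∏ t ∈ range (m+1), (c+i+(1+t)-1)
        = (c+i-1)! * ∏ t ∈ range (m+1), ((c+i-1)+1+t) := by
          congr 1; exact Finset.prod_congr rfl fun t _ => by omega
      _ = ((c+i-1)+(m+1))! := prodRange (c+i-1) (m+1)
      _ = (c+m+i)! := by congr 1; omega
  have hB : (2*c+m+i)! * ∏ j ∈ Icc (m+2) (m+i), (2*c+i+j-1) = (2*c+m+2*i-1)! := by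
    rw [show Icc (m+2) (m+i) = Ico (m+2) (m+i+1) by ext x; simp only [Finset.mem_Icc, Finset.mem_Ico]; omega,
      Finset.prod_Ico_eq_prod_range]
    calc (2*c+m+i)! * ∏ t ∈ range (m+i+1-(m+2)), (2*c+i+(m+2+t)-1)
        = (2*c+m+i)! * ∏ t ∈ range (i-1), ((2*c+m+i)+1+t) := by
          rw [show m+i+1-(m+2) = i-1 by omega]
          congr 1; exact Finset.prod_congr rfl fun t _ => by omega
      _ = ((2*c+m+i)+(i-1))! := prodRange (2*c+m+i) (i-1)
      _ = (2*c+m+2*i-1)! := by congr 1; omega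
  calc ((c+i-1)! * (2*c+m+i)!) * ((∏ j ∈ Icc 1 (m+1), (c+i+j-1)) * ∏ j ∈ Icc (m+2) (m+i), (2*c+i+j-1))
      = ((c+i-1)! * ∏ j ∈ Icc 1 (m+1), (c+i+j-1)) *
          ((2*c+m+i)! * ∏ j ∈ Icc (m+2) (m+i), (2*c+i+j-1)) := by ring
    _ = (c+m+i)! * (2*c+m+2*i-1)! := by rw [hA, hB]

/-- The main factorial-product divisibility. -/
lemma MAIN (a m c : ℕ) :
    (∏ i ∈ Icc 1 a, ((m+2*i-1)! * ((c+i-1)! * (2*c+m+i)!)))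
      ∣ ∏ i ∈ Icc 1 a, ((i-1)! * ((c+m+i)! * (2*c+m+2*i-1)!)) := by
  set A := ∏ i ∈ Icc 1 a, ((m+2*i-1)! * ((c+i-1)! * (2*c+m+i)!)) with hA
  set B := ∏ i ∈ Icc 1 a, ((i-1)! * ((c+m+i)! * (2*c+m+2*i-1)!)) with hB
  have hA0 : A ≠ 0 := Finset.prod_ne_zero_iff.mpr fun i _ => by positivity
  have hB0 : B ≠ 0 := Finset.prod_ne_zero_iff.mpr fun i _ => by positivity
  rw [← Nat.factorization_le_iff_dvd hA0 hB0]
  intro p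
  by_cases hp : p.Prime
  · haveI : Fact p.Prime := ⟨hp⟩
    set b := 2*c+m+2*a+1 with hb
    have hlog : ∀ n : ℕ, n ≤ 2*c+m+2*a → Nat.log p n < b := by
      intro n hn
      exact lt_of_le_of_lt (Nat.log_le_self p n) (by omega)
    have hfact : ∀ n : ℕ, n ≤ 2*c+m+2*a →
        (n !).factorization p = ∑ k ∈ Ico 1 b, n / p ^ k := by
      intro n hn
      rw [Nat.factorization_def _ hp]
      exact padicValNat_factorial (hlog n hn)
    have hAe : A.factorization p
        = ∑ i ∈ Icc 1 a, (((m+2*i-1)!).factorization p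
            + (((c+i-1)!).factorization p + ((2*c+m+i)!).factorization p)) := by
      rw [hA, Nat.factorization_prod fun i _ => by positivity]
      rw [Finset.sum_apply']
      apply Finset.sum_congr rfl
      intro i _
      rw [Nat.factorization_mul (by positivity) (by positivity),
        Nat.factorization_mul (by positivity) (by positivity)]
      rfl
    have hBe : B.factorization p
        = ∑ i ∈ Icc 1 a, (((i-1)!).factorization p
            + (((c+m+i)!).factorization p + ((2*c+m+2*i-1)!).factorization p)) := by
      rw [hB, Nat.factorization_prod fun i _ => by positivity]
      rw [Finset.sum_apply']
      apply Finset.sum_congr rfl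
      intro i _
      rw [Nat.factorization_mul (by positivity) (by positivity),
        Nat.factorization_mul (by positivity) (by positivity)]
      rfl
    rw [hAe, hBe]
    calc ∑ i ∈ Icc 1 a, (((m+2*i-1)!).factorization p
            + (((c+i-1)!).factorization p + ((2*c+m+i)!).factorization p))
        = ∑ k ∈ Ico 1 b, ∑ i ∈ Icc 1 a,
            ((m+2*i-1)/p^k + ((c+i-1)/p^k + (2*c+m+i)/p^k)) := by
          rw [Finset.sum_comm]
          apply Finset.sum_congr rfl
          intro i hi
          have hi' := Finset.mem_Icc.mp hi
          rw [hfact _ (by omega), hfact _ (by omega), hfact _ (by omega),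
            ← Finset.sum_add_distrib, ← Finset.sum_add_distrib]
      _ ≤ ∑ k ∈ Ico 1 b, ∑ i ∈ Icc 1 a,
            ((i-1)/p^k + ((c+m+i)/p^k + (2*c+m+2*i-1)/p^k)) := by
          apply Finset.sum_le_sum
          intro k _
          have hq : 0 < p^k := pow_pos hp.pos k
          have hL : ∑ i ∈ Icc 1 a, ((m+2*i-1)/p^k + ((c+i-1)/p^k + (2*c+m+i)/p^k))
              = ∑ x ∈ range a, ((m+1+2*x)/p^k + ((c+x)/p^k + (2*c+m+1+x)/p^k)) := by
            rw [show Icc 1 a = Ico 1 (a+1) from by ext x; simp only [Finset.mem_Icc, Finset.mem_Ico]; omega,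
              Finset.sum_Ico_eq_sum_range]
            simp only [Nat.add_sub_cancel]
            apply Finset.sum_congr rfl
            intro x _
            rw [show m+2*(1+x)-1 = m+1+2*x from by omega,
              show c+(1+x)-1 = c+x from by omega,
              show 2*c+m+(1+x) = 2*c+m+1+x from by omega]
          have hR : ∑ i ∈ Icc 1 a, ((i-1)/p^k + ((c+m+i)/p^k + (2*c+m+2*i-1)/p^k))
              = ∑ x ∈ range a, (x/p^k + ((c+m+1+x)/p^k + (2*c+m+1+2*x)/p^k)) := by
            rw [show Icc 1 a = Ico 1 (a+1) from by ext x; simp only [Finset.mem_Icc, Finset.mem_Ico]; omega,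
              Finset.sum_Ico_eq_sum_range]
            simp only [Nat.add_sub_cancel]
            apply Finset.sum_congr rfl
            intro x _
            rw [show 1+x-1 = x from by omega,
              show c+m+(1+x) = c+m+1+x from by omega,
              show 2*c+m+2*(1+x)-1 = 2*c+m+1+2*x from by omega]
          rw [hL, hR]
          exact KEY (p^k) hq c m a
      _ = ∑ i ∈ Icc 1 a, (((i-1)!).factorization p
            + (((c+m+i)!).factorization p + ((2*c+m+2*i-1)!).factorization p)) := by
          rw [Finset.sum_comm]
          apply Finset.sum_congr rfl
          intro i hi
          have hi' := Finset.mem_Icc.mp hi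
          rw [hfact _ (by omega), hfact _ (by omega), hfact _ (by omega),
            ← Finset.sum_add_distrib, ← Finset.sum_add_distrib]
  · simp [Nat.factorization_eq_zero_of_not_prime _ hp]

/-- Proctor's product formula for the number of lozenge tilings of a halved hexagon. -/
def proctorProduct (a b c : ℕ) : ℚ :=
  ∏ i ∈ Finset.Icc 1 a,
    ((∏ j ∈ Finset.Icc 1 (b - a + 1), ((c : ℚ) + i + j - 1) / ((i : ℚ) + j - 1)) *
      ∏ j ∈ Finset.Icc (b - a + 2) (b - a + i), (2 * (c : ℚ) + i + j - 1) / ((i : ℚ) + j - 1))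

/-- Ciucu's weighted version of Proctor's formula. -/
def ciucuProduct (a b c : ℕ) : ℚ :=
  (2 : ℚ) ^ (-(a : ℤ)) *
    (∏ i ∈ Finset.Icc 1 a, (2 * (c : ℚ) + b - a + i) / ((c : ℚ) + b - a + i)) *
    proctorProduct a b c


lemma Dden_dvd_Nnum (a m c : ℕ) :
    (∏ i ∈ Icc 1 a, Pd m i) ∣ ∏ i ∈ Icc 1 a, Pn m c i := by
  have hC : 0 < ∏ i ∈ Icc 1 a, ((i-1)! * ((c+i-1)! * (2*c+m+i)!)) :=
    Finset.prod_pos fun i _ => by positivity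
  rw [← Nat.mul_dvd_mul_iff_right hC]
  have hA : (∏ i ∈ Icc 1 a, Pd m i) * ∏ i ∈ Icc 1 a, ((i-1)! * ((c+i-1)! * (2*c+m+i)!))
      = ∏ i ∈ Icc 1 a, ((m+2*i-1)! * ((c+i-1)! * (2*c+m+i)!)) := by
    rw [← Finset.prod_mul_distrib]
    apply Finset.prod_congr rfl
    intro i hi
    have hi' := (Finset.mem_Icc.mp hi).1
    calc Pd m i * ((i-1)! * ((c+i-1)! * (2*c+m+i)!))
        = ((i-1)! * Pd m i) * ((c+i-1)! * (2*c+m+i)!) := by ring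
      _ = (m+2*i-1)! * ((c+i-1)! * (2*c+m+i)!) := by rw [Pd_eq m i hi']
  have hB : (∏ i ∈ Icc 1 a, Pn m c i) * ∏ i ∈ Icc 1 a, ((i-1)! * ((c+i-1)! * (2*c+m+i)!))
      = ∏ i ∈ Icc 1 a, ((i-1)! * ((c+m+i)! * (2*c+m+2*i-1)!)) := by
    rw [← Finset.prod_mul_distrib]
    apply Finset.prod_congr rfl
    intro i hi
    have hi' := (Finset.mem_Icc.mp hi).1
    calc Pn m c i * ((i-1)! * ((c+i-1)! * (2*c+m+i)!))
        = (i-1)! * (((c+i-1)! * (2*c+m+i)!) * Pn m c i) := by ring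
      _ = (i-1)! * ((c+m+i)! * (2*c+m+2*i-1)!) := by rw [Pn_eq m c i hi']
  rw [hA, hB]
  exact MAIN a m c

lemma proctor_eq_div (a b c : ℕ) (hab : a ≤ b) :
    proctorProduct a b c
      = ((∏ i ∈ Icc 1 a, Pn (b-a) c i : ℕ) : ℚ) / ((∏ i ∈ Icc 1 a, Pd (b-a) i : ℕ) : ℚ) := by
  set m := b - a with hm
  rw [proctorProduct]
  push_cast
  rw [← Finset.prod_div_distrib]
  apply Finset.prod_congr rfl
  intro i hi
  have hi' := (Finset.mem_Icc.mp hi).1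
  have hnum : ∀ j ∈ Icc 1 (m+1), ((c:ℚ) + i + j - 1) = ((c+i+j-1 : ℕ) : ℚ) := by
    intro j hj
    have hj' := (Finset.mem_Icc.mp hj).1
    push_cast [Nat.cast_sub (by omega : 1 ≤ c+i+j)]
    ring
  have hnum2 : ∀ j ∈ Icc (m+2) (m+i), (2*(c:ℚ) + i + j - 1) = ((2*c+i+j-1 : ℕ) : ℚ) := by
    intro j hj
    have hj' := (Finset.mem_Icc.mp hj).1
    push_cast [Nat.cast_sub (by omega : 1 ≤ 2*c+i+j)]
    ring
  have hden : ∀ j, 1 ≤ j → ((i:ℚ) + j - 1) = ((i+j-1 : ℕ) : ℚ) := by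
    intro j hj
    push_cast [Nat.cast_sub (by omega : 1 ≤ i+j)]
    ring
  have e1 : ∏ j ∈ Icc 1 (m+1), ((c:ℚ) + i + j - 1)/((i:ℚ) + j - 1)
      = (∏ j ∈ Icc 1 (m+1), ((c+i+j-1:ℕ):ℚ)) / ∏ j ∈ Icc 1 (m+1), ((i+j-1:ℕ):ℚ) := by
    rw [← Finset.prod_div_distrib]
    apply Finset.prod_congr rfl
    intro j hj
    rw [hnum j hj, hden j (Finset.mem_Icc.mp hj).1]
  have e2 : ∏ j ∈ Icc (m+2) (m+i), (2*(c:ℚ) + i + j - 1)/((i:ℚ) + j - 1)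
      = (∏ j ∈ Icc (m+2) (m+i), ((2*c+i+j-1:ℕ):ℚ)) / ∏ j ∈ Icc (m+2) (m+i), ((i+j-1:ℕ):ℚ) := by
    rw [← Finset.prod_div_distrib]
    apply Finset.prod_congr rfl
    intro j hj
    have hj2 := (Finset.mem_Icc.mp hj).1
    rw [hnum2 j hj, hden j (by omega)]

  have hmerge : (∏ j ∈ Icc 1 (m+1), ((i+j-1:ℕ):ℚ)) * ∏ j ∈ Icc (m+2) (m+i), ((i+j-1:ℕ):ℚ)
      = ∏ j ∈ Icc 1 (m+i), ((i+j-1:ℕ):ℚ) := by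
    have h1 : Icc 1 (m+1) = Ioc 0 (m+1) := by ext x; simp only [Finset.mem_Icc, Finset.mem_Ioc]; omega
    have h2 : Icc (m+2) (m+i) = Ioc (m+1) (m+i) := by ext x; simp only [Finset.mem_Icc, Finset.mem_Ioc]; omega
    have h3 : Icc 1 (m+i) = Ioc 0 (m+i) := by ext x; simp only [Finset.mem_Icc, Finset.mem_Ioc]; omega
    rw [h1, h2, h3]
    exact Finset.prod_Ioc_consecutive _ (by omega) (by omega)
  rw [e1, e2, div_mul_div_comm, hmerge, Pn, Pd]
  push_cast
  rfl

theorem ciucuProduct_positive_dyadic (a b c : ℕ)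
    (ha : 0 < a) (hb : 0 < b) (hc : 0 < c) (hab : a ≤ b) :
    0 < ciucuProduct a b c ∧
      (0 < 2 ^ a * ciucuProduct a b c ∧
        ((2 ^ a * ciucuProduct a b c : ℚ)).den ∣ ∏ i ∈ Finset.Icc 1 a, (c + b - a + i)) := by
  have hPpos : 0 < proctorProduct a b c := by
    rw [proctorProduct]
    apply Finset.prod_pos
    intro i hi
    obtain ⟨hi1, hi2⟩ := Finset.mem_Icc.mp hi
    have hic : (1:ℚ) ≤ (i:ℚ) := by exact_mod_cast hi1
    have hcc : (0:ℚ) ≤ (c:ℚ) := Nat.cast_nonneg c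
    apply mul_pos
    · apply Finset.prod_pos
      intro j hj
      obtain ⟨hj1, hj2⟩ := Finset.mem_Icc.mp hj
      have hjc : (1:ℚ) ≤ (j:ℚ) := by exact_mod_cast hj1
      exact div_pos (by linarith) (by linarith)
    · apply Finset.prod_pos
      intro j hj
      obtain ⟨hj1, hj2⟩ := Finset.mem_Icc.mp hj
      have hjc : (1:ℚ) ≤ (j:ℚ) := by exact_mod_cast (by omega : 1 ≤ j)
      exact div_pos (by linarith) (by linarith)
  have hba : (0:ℚ) ≤ (b:ℚ) - (a:ℚ) := by
    rw [sub_nonneg]; exact_mod_cast hab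
  have hRpos : 0 < ∏ i ∈ Finset.Icc 1 a, (2*(c:ℚ) + b - a + i)/((c:ℚ) + b - a + i) := by
    apply Finset.prod_pos
    intro i hi
    obtain ⟨hi1, hi2⟩ := Finset.mem_Icc.mp hi
    have hic : (1:ℚ) ≤ (i:ℚ) := by exact_mod_cast hi1
    have hcc : (0:ℚ) ≤ (c:ℚ) := Nat.cast_nonneg c
    exact div_pos (by linarith) (by linarith)
  have hc1 : 0 < ciucuProduct a b c := by
    rw [ciucuProduct]
    exact mul_pos (mul_pos (zpow_pos (by norm_num) _) hRpos) hPpos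
  refine ⟨hc1, mul_pos (by positivity) hc1, ?_⟩
  -- the integer W := Nnum / Dden
  have hdvd := Dden_dvd_Nnum a (b-a) c
  have hDpos : 0 < ∏ i ∈ Icc 1 a, Pd (b-a) i := by
    apply Finset.prod_pos
    intro i hi
    rw [Pd]
    apply Finset.prod_pos
    intro j hj
    have h1 := (Finset.mem_Icc.mp hi).1
    have h2 := (Finset.mem_Icc.mp hj).1
    omega
  set W : ℕ := (∏ i ∈ Icc 1 a, Pn (b-a) c i) / (∏ i ∈ Icc 1 a, Pd (b-a) i) with hW
  have hPW : proctorProduct a b c = (W:ℚ) := by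
    rw [proctor_eq_div a b c hab, hW,
      Nat.cast_div hdvd (by exact_mod_cast hDpos.ne')]
  set U : ℕ := ∏ i ∈ Icc 1 a, (2*c+(b-a)+i) with hU
  set V : ℕ := ∏ i ∈ Icc 1 a, (c+(b-a)+i) with hV
  have hVpos : 0 < V := by
    rw [hV]
    apply Finset.prod_pos
    intro i hi
    have := (Finset.mem_Icc.mp hi).1
    omega
  have hRU : ∏ i ∈ Finset.Icc 1 a, (2*(c:ℚ) + b - a + i)/((c:ℚ) + b - a + i)
      = (U:ℚ)/(V:ℚ) := by
    rw [hU, hV, Nat.cast_prod, Nat.cast_prod, ← Finset.prod_div_distrib]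
    apply Finset.prod_congr rfl
    intro i _
    have e1 : ((2*c+(b-a)+i : ℕ) : ℚ) = 2*(c:ℚ) + b - a + i := by
      push_cast [Nat.cast_sub hab]
      ring
    have e2 : ((c+(b-a)+i : ℕ) : ℚ) = (c:ℚ) + b - a + i := by
      push_cast [Nat.cast_sub hab]
      ring
    rw [e1, e2]
  have hV0 : (V:ℚ) ≠ 0 := by exact_mod_cast hVpos.ne'
  have h20 : ((2:ℚ)^a) ≠ 0 := by positivity
  have key : (2:ℚ)^a * ciucuProduct a b c = ((U*W : ℕ):ℚ)/((V:ℕ):ℚ) := by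
    rw [ciucuProduct, hPW, hRU, show (2:ℚ)^(-(a:ℤ)) = ((2:ℚ)^a)⁻¹ by
      rw [zpow_neg, zpow_natCast]]
    push_cast
    field_simp
  rw [key]
  have hden := Rat.den_dvd ((U*W : ℕ) : ℤ) ((V:ℕ):ℤ)
  rw [Rat.divInt_eq_div] at hden
  have hden' : (((U*W : ℕ):ℚ)/((V:ℕ):ℚ)).den ∣ V := by
    have : (((U*W : ℕ) : ℤ) : ℚ) = ((U*W : ℕ) : ℚ) := by push_cast; ring
    have h2 : (((V:ℕ) : ℤ) : ℚ) = ((V:ℕ) : ℚ) := by push_cast; ring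
    rw [this, h2] at hden
    exact_mod_cast hden
  have hVeq : V = ∏ i ∈ Finset.Icc 1 a, (c + b - a + i) := by
    rw [hV]
    apply Finset.prod_congr rfl
    intro i _
    omega
  rw [← hVeq]
  exact hden'
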